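/- Let $c_1, \ldots, c_\nu \in \mathbb{Q}^*_{>0}$ be multiplicatively independent (i.e. $\prod c_h^{l_h} = 1$ with $l_h \in \mathbb{Z}$ implies all $l_h = 0$). For $x \in \mathbb{Q}^*_{>0}$ let $m_x$ be the largest integer $m$ with $x^{1/m} \in \mathbb{Q}$, and $\widehat{x} = x^{1/m_x}$. Then $c_1, \ldots, c_\nu$ are strongly multiplicatively independent (whenever $\prod c_h^{l_h} = c$ then $m_{c_h} l_h \equiv 0 \bmod m_c$ for all $h$) if and only if: whenever $c \in \langle c_1, \ldots, c_\nu \rangle$, then $\widehat{c} \in \langle \widehat{c_1}, \ldots, \widehat{c_\nu} \rangle$. -/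

import Mathlib

open scoped Classical

/-- `mRoot x` is the largest `m` such that `x` has a positive rational `m`-th root. -/
noncomputable def mRoot (x : ℚ) : ℕ :=
  sSup {m : ℕ | ∃ y : ℚ, 0 < y ∧ y ^ m = x}

/-- `hatRoot x` is a positive rational with `(hatRoot x) ^ (mRoot x) = x` (when one exists). -/
noncomputable def hatRoot (x : ℚ) : ℚ :=
  if h : ∃ y : ℚ, 0 < y ∧ y ^ mRoot x = x then h.choose else 1

lemma bddAbove_rootSet {x : ℚ} (hx : 0 < x) (hx1 : x ≠ 1) :
    BddAbove {m : ℕ | ∃ y : ℚ, 0 < y ∧ y ^ m = x} := by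
  refine ⟨x.num.natAbs + x.den, ?_⟩
  rintro m ⟨y, hy, rfl⟩
  have hy1 : y ≠ 1 := by rintro rfl; simp at hx1
  have hkey : 2 ≤ y.num.natAbs ∨ 2 ≤ y.den := by
    by_contra hc
    push_neg at hc
    have hnum : y.num = 1 := by
      have := Rat.num_pos.mpr hy
      omega
    have hden : y.den = 1 := by
      have := y.pos
      omega
    exact hy1 (by rw [← Rat.num_div_den y, hnum, hden]; norm_num)
  have hm : m < 2 ^ m := Nat.lt_two_pow_self (n := m)
  rcases hkey with hk | hk
  · have h1 : (y ^ m).num.natAbs = y.num.natAbs ^ m := by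
      rw [Rat.num_pow, Int.natAbs_pow]
    have h2 : 2 ^ m ≤ y.num.natAbs ^ m := Nat.pow_le_pow_left hk m
    omega
  · have h1 : (y ^ m).den = y.den ^ m := Rat.den_pow y m
    have h2 : 2 ^ m ≤ y.den ^ m := Nat.pow_le_pow_left hk m
    omega

lemma mRoot_pos {x : ℚ} (hx : 0 < x) (hx1 : x ≠ 1) : 0 < mRoot x :=
  lt_of_lt_of_le one_pos (le_csSup (bddAbove_rootSet hx hx1) ⟨x, hx, pow_one x⟩)

lemma hatRoot_spec {x : ℚ} (hx : 0 < x) (hx1 : x ≠ 1) :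
    0 < hatRoot x ∧ hatRoot x ^ mRoot x = x := by
  have hne : {m : ℕ | ∃ y : ℚ, 0 < y ∧ y ^ m = x}.Nonempty := ⟨1, x, hx, pow_one x⟩
  have h : ∃ y : ℚ, 0 < y ∧ y ^ mRoot x = x :=
    Nat.sSup_mem hne (bddAbove_rootSet hx hx1)
  rw [hatRoot, dif_pos h]
  exact h.choose_spec

lemma hatRoot_unique {x y : ℚ} (hx : 0 < x) (hx1 : x ≠ 1) (hy : 0 < y)
    (h : y ^ mRoot x = x) : y = hatRoot x := by
  obtain ⟨h1, h2⟩ := hatRoot_spec hx hx1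
  exact (pow_left_inj₀ hy.le h1.le (mRoot_pos hx hx1).ne').mp (h.trans h2.symm)

theorem stmt5 (ν : ℕ) (c : Fin ν → ℚ) (hpos : ∀ h, 0 < c h)
    (hindep : ∀ l : Fin ν → ℤ, ∏ h, c h ^ l h = 1 → l = 0) :
    (∀ (l : Fin ν → ℤ) (x : ℚ), 0 < x → x ≠ 1 → ∏ h, c h ^ l h = x →
        ∀ h, (mRoot x : ℤ) ∣ (mRoot (c h) : ℤ) * l h) ↔
      (∀ (l : Fin ν → ℤ) (x : ℚ), 0 < x → x ≠ 1 → ∏ h, c h ^ l h = x →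
        ∃ l' : Fin ν → ℤ, hatRoot x = ∏ h, hatRoot (c h) ^ l' h) := by
  -- each c h is ≠ 1
  have hne1 : ∀ h, c h ≠ 1 := by
    intro h h1
    have hp : ∏ g, c g ^ (Pi.single h 1 : Fin ν → ℤ) g = 1 := by
      rw [Fintype.prod_eq_single h (fun g hg => by
        simp [Pi.single_apply, if_neg hg])]
      simp [h1]
    have := congrFun (hindep _ hp) h
    simp at this
  have hchat : ∀ h, 0 < hatRoot (c h) ∧ hatRoot (c h) ^ mRoot (c h) = c h :=
    fun h => hatRoot_spec (hpos h) (hne1 h)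
  have hchat0 : ∀ h, hatRoot (c h) ≠ 0 := fun h => (hchat h).1.ne'
  have hmpos : ∀ h, 0 < mRoot (c h) := fun h => mRoot_pos (hpos h) (hne1 h)
  -- rewrite products of c in terms of hatRoot c
  have hrw : ∀ k : Fin ν → ℤ, ∏ h, c h ^ k h
      = ∏ h, hatRoot (c h) ^ ((mRoot (c h) : ℤ) * k h) := by
    intro k
    refine Finset.prod_congr rfl fun h _ => ?_
    calc c h ^ k h = (hatRoot (c h) ^ (mRoot (c h) : ℤ)) ^ k h := by
          rw [zpow_natCast, (hchat h).2]
      _ = hatRoot (c h) ^ ((mRoot (c h) : ℤ) * k h) := by rw [← zpow_mul]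
  -- the hatRoot (c h) are multiplicatively independent
  have hhatindep : ∀ k : Fin ν → ℤ, ∏ h, hatRoot (c h) ^ k h = 1 → k = 0 := by
    intro k hk
    set N : ℕ := ∏ g, mRoot (c g) with hN
    have hNfac : ∀ h, (N : ℤ) = (mRoot (c h) : ℤ) * ∏ g ∈ Finset.univ.erase h, (mRoot (c g) : ℤ) := by
      intro h
      have hcast : (N : ℤ) = ∏ g, (mRoot (c g) : ℤ) := by rw [hN]; push_cast; rfl
      rw [hcast, ← Finset.mul_prod_erase _ _ (Finset.mem_univ h)]
    have hPpos : ∀ h, 0 < ∏ g ∈ Finset.univ.erase h, (mRoot (c g) : ℤ) :=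
      fun h => Finset.prod_pos fun g _ => by exact_mod_cast hmpos g
    have h1 : ∏ h, c h ^ (k h * ∏ g ∈ Finset.univ.erase h, (mRoot (c g) : ℤ)) = 1 := by
      rw [hrw]
      have : ∀ h : Fin ν, (mRoot (c h) : ℤ) * (k h * ∏ g ∈ Finset.univ.erase h, (mRoot (c g) : ℤ))
          = k h * N := by
        intro h; rw [hNfac h]; ring
      rw [Finset.prod_congr rfl fun h _ => by rw [this h]]
      calc ∏ h, hatRoot (c h) ^ (k h * (N : ℤ))
          = (∏ h, hatRoot (c h) ^ k h) ^ (N : ℤ) := by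
            rw [← Finset.prod_zpow]
            exact Finset.prod_congr rfl fun h _ => by rw [← zpow_mul]
        _ = 1 := by rw [hk, one_zpow]
    have h2 := hindep _ h1
    funext h
    have := congrFun h2 h
    simp only [Pi.zero_apply] at this ⊢
    rcases mul_eq_zero.mp this with h' | h'
    · exact h'
    · exact absurd h' (hPpos h).ne'
  constructor
  · -- strong independence → hat closure
    intro SI l x hx hx1 hprod
    have hm := mRoot_pos hx hx1
    obtain ⟨hxhat, hxpow⟩ := hatRoot_spec hx hx1
    refine ⟨fun h => ((mRoot (c h) : ℤ) * l h) / (mRoot x : ℤ), ?_⟩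
    have hdvd := SI l x hx hx1 hprod
    refine (hatRoot_unique hx hx1 (Finset.prod_pos fun h _ => zpow_pos (hchat h).1 _) ?_).symm
    have : (∏ h, hatRoot (c h) ^ ((mRoot (c h) : ℤ) * l h / (mRoot x : ℤ))) ^ (mRoot x : ℤ)
        = ∏ h, hatRoot (c h) ^ ((mRoot (c h) : ℤ) * l h) := by
      rw [← Finset.prod_zpow]
      refine Finset.prod_congr rfl fun h _ => ?_
      rw [← zpow_mul, Int.ediv_mul_cancel (hdvd h)]
    have hfin : (∏ h, hatRoot (c h) ^ ((mRoot (c h) : ℤ) * l h / (mRoot x : ℤ))) ^ (mRoot x : ℤ) = x := by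
      rw [this, ← hrw, hprod]
    rw [← zpow_natCast] at *
    exact hfin
  · -- hat closure → strong independence
    intro H l x hx hx1 hprod h
    obtain ⟨l', hl'⟩ := H l x hx hx1 hprod
    have hm := mRoot_pos hx hx1
    obtain ⟨hxhat, hxpow⟩ := hatRoot_spec hx hx1
    -- x = ∏ hatRoot (c h) ^ (mRoot x * l' h)
    have h1 : ∏ g, hatRoot (c g) ^ ((mRoot x : ℤ) * l' g) = x := by
      calc ∏ g, hatRoot (c g) ^ ((mRoot x : ℤ) * l' g)
          = (∏ g, hatRoot (c g) ^ l' g) ^ (mRoot x : ℤ) := by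
            rw [← Finset.prod_zpow]
            exact Finset.prod_congr rfl fun g _ => by rw [← zpow_mul, mul_comm]
        _ = x := by rw [← hl', zpow_natCast, hxpow]
    have h2 : ∏ g, hatRoot (c g) ^ ((mRoot (c g) : ℤ) * l g) = x := by rw [← hrw, hprod]
    have h3 : ∏ g, hatRoot (c g) ^ ((mRoot x : ℤ) * l' g - (mRoot (c g) : ℤ) * l g) = 1 := by
      rw [Finset.prod_congr rfl fun g _ => zpow_sub₀ (hchat0 g) _ _, Finset.prod_div_distrib,
        h1, h2, div_self hx.ne']
    have := congrFun (hhatindep _ h3) h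
    simp only [Pi.zero_apply, sub_eq_zero] at this
    exact ⟨l' h, this.symm⟩
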